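/- The function σ₁(s) = [Γ(a+1)/(√π Γ(a+1/2))] (1+s²)^{-a} / X(s), with X(s) = 1/2 + [Γ(a+1)/(√π Γ(a+1/2))] s·₂F₁(a+1,1/2;3/2;-s²), solves the ODE (1+s²)²(σ'')² + 4(1+s²)(σ')³ - 8sσ(σ')² + 4σ²(σ'-a²) + 8a²sσσ' + 4[(1+2a) - a²s²](σ')² = 0 (the N = 1 case). -/

import Mathlib

open MeasureTheory

/-- The Gauss hypergeometric function `₂F₁(a,b;c;z)` (for `c > b > 0`, `z < 1`),
defined via the Euler integral representation. -/
noncomputable def hyp2F1 (a b c z : ℝ) : ℝ :=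
  (Real.Gamma c / (Real.Gamma b * Real.Gamma (c - b))) *
    ∫ t in Set.Ioo (0 : ℝ) 1, t ^ (b - 1) * (1 - t) ^ (c - b - 1) * (1 - z * t) ^ (-a)

/-- `X(s) = 1/2 + [Γ(a+1)/(√π Γ(a+1/2))] s ₂F₁(a+1,1/2;3/2;-s²)`. -/
noncomputable def Xfun (a : ℝ) (s : ℝ) : ℝ :=
  1 / 2 + Real.Gamma (a + 1) / (Real.sqrt Real.pi * Real.Gamma (a + 1 / 2)) *
    s * hyp2F1 (a + 1) (1 / 2) (3 / 2) (-s ^ 2)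

open Set Real

noncomputable def cau (a : ℝ) (u : ℝ) : ℝ := (1 + u ^ 2) ^ (-(a + 1))

lemma cau_cont (a : ℝ) : Continuous (cau a) := by
  have h : ∀ u : ℝ, (0:ℝ) < 1 + u ^ 2 := fun u => by positivity
  exact (continuous_const.add (continuous_pow 2)).rpow_const (fun u => Or.inl (h u).ne')

lemma cau_pos (a u : ℝ) : 0 < cau a u := Real.rpow_pos_of_pos (by positivity) _

lemma hyp_eq (a : ℝ) (s : ℝ) :
    s * hyp2F1 (a + 1) (1 / 2) (3 / 2) (-s ^ 2) = ∫ u in (0:ℝ)..s, cau a u := by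
  have hg32 : Real.Gamma (3 / 2) = (1 / 2) * Real.sqrt Real.pi := by
    have : (3 / 2 : ℝ) = 1 / 2 + 1 := by norm_num
    rw [this, Real.Gamma_add_one (by norm_num), Real.Gamma_one_half_eq]
  have hpi : Real.sqrt Real.pi ≠ 0 := by positivity
  have pref : Real.Gamma (3/2) / (Real.Gamma (1/2) * Real.Gamma (3/2 - 1/2)) = 1/2 := by
    rw [hg32, Real.Gamma_one_half_eq, show (3/2 - 1/2 : ℝ) = 1 by norm_num, Real.Gamma_one]
    field_simp
  -- step 1: substitution t = v^2 inside the Euler integral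
  have himg : (fun v : ℝ => v ^ 2) '' Ioo 0 1 = Ioo (0:ℝ) 1 := by
    ext x
    constructor
    · rintro ⟨v, ⟨hv0, hv1⟩, rfl⟩
      dsimp only
      refine ⟨by positivity, ?_⟩
      nlinarith [mul_pos (sub_pos.2 hv1) (by linarith : (0:ℝ) < 1 + v)]
    · rintro ⟨hx0, hx1⟩
      refine ⟨Real.sqrt x, ⟨Real.sqrt_pos.2 hx0, ?_⟩, Real.sq_sqrt hx0.le⟩
      calc Real.sqrt x < Real.sqrt 1 := Real.sqrt_lt_sqrt hx0.le hx1
        _ = 1 := Real.sqrt_one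
  have hinj : InjOn (fun v : ℝ => v ^ 2) (Ioo 0 1) := fun u hu v hv h => by
    simp only at h
    nlinarith [hu.1, hv.1]
  have hderiv : ∀ v ∈ Ioo (0:ℝ) 1,
      HasDerivWithinAt (fun v : ℝ => v ^ 2) (2 * v) (Ioo 0 1) v := by
    intro v _
    simpa using (hasDerivAt_pow 2 v).hasDerivWithinAt
  have step1 : ∀ g : ℝ → ℝ, (∫ t in Ioo (0:ℝ) 1, g t)
      = ∫ v in Ioo (0:ℝ) 1, |2 * v| • g (v ^ 2) := by
    intro g
    calc (∫ t in Ioo (0:ℝ) 1, g t) = ∫ t in (fun v : ℝ => v ^ 2) '' Ioo 0 1, g t := by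
          rw [himg]
      _ = _ := integral_image_eq_integral_abs_deriv_smul measurableSet_Ioo hderiv hinj g
  -- the Euler integrand
  have hint : (∫ t in Ioo (0:ℝ) 1, t ^ ((1:ℝ)/2 - 1) * (1 - t) ^ ((3:ℝ)/2 - 1/2 - 1)
        * (1 - (-s^2) * t) ^ (-(a+1)))
      = ∫ v in Ioo (0:ℝ) 1, 2 * cau a (s * v) := by
    rw [step1]
    apply setIntegral_congr_fun measurableSet_Ioo
    intro v hv
    obtain ⟨hv0, hv1⟩ := hv
    have hv0' : (0:ℝ) ≤ v := hv0.le
    dsimp only [cau]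
    have h1 : ((v:ℝ) ^ 2) ^ ((1:ℝ)/2 - 1) = v⁻¹ := by
      rw [← Real.rpow_natCast v 2, ← Real.rpow_mul hv0']
      norm_num
      exact Real.rpow_neg_one v
    have h2 : ((1:ℝ) - v ^ 2) ^ ((3:ℝ)/2 - 1/2 - 1) = 1 := by
      norm_num
    have h3 : (1 - (-s^2) * v^2 : ℝ) = 1 + (s*v)^2 := by ring
    rw [smul_eq_mul, h1, h2, h3, abs_of_nonneg (by positivity : (0:ℝ) ≤ 2 * v)]
    field_simp
  -- step 2: scaling u = s * v
  have step2 : (∫ v in Ioo (0:ℝ) 1, 2 * cau a (s * v)) = 2 * ∫ v in (0:ℝ)..1, cau a (s * v) := by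
    rw [intervalIntegral.integral_of_le (by norm_num : (0:ℝ) ≤ 1),
      integral_Ioc_eq_integral_Ioo, ← integral_const_mul]
  have step3 : s * ∫ v in (0:ℝ)..1, cau a (s * v) = ∫ u in (0:ℝ)..s, cau a u := by
    have h := intervalIntegral.integral_comp_smul_deriv
      (f := fun v : ℝ => s * v) (f' := fun _ => s) (g := cau a) (a := 0) (b := 1)
      (fun x _ => by simpa using (hasDerivAt_id x).const_mul s)
      continuousOn_const (cau_cont a)
    simp only [smul_eq_mul, Function.comp, mul_zero, mul_one] at h
    rw [← h, intervalIntegral.integral_const_mul]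
  -- assemble
  unfold hyp2F1
  rw [pref, hint, step2, ← step3]
  ring

lemma beta_real (a : ℝ) (ha : 0 < a) :
    Real.Gamma (a + 1/2) * Real.sqrt Real.pi =
      Real.Gamma (a + 1) * ∫ x in Ioo (0:ℝ) 1, x ^ (a - 1/2) * (1 - x) ^ (-(1/2):ℝ) := by
  have hbc := Complex.Gamma_mul_Gamma_eq_betaIntegral
    (s := ((a + 1/2 : ℝ) : ℂ)) (t := ((1/2 : ℝ) : ℂ)) (by simp; linarith) (by norm_num)
  have hcast : Complex.betaIntegral ((a + 1/2 : ℝ) : ℂ) ((1/2 : ℝ) : ℂ)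
      = ((∫ x in Ioo (0:ℝ) 1, x ^ (a - 1/2) * (1 - x) ^ (-(1/2):ℝ) : ℝ) : ℂ) := by
    unfold Complex.betaIntegral
    rw [intervalIntegral.integral_of_le (by norm_num : (0:ℝ) ≤ 1),
      integral_Ioc_eq_integral_Ioo]
    calc (∫ t in Ioo (0:ℝ) 1, (t:ℂ) ^ (((a + 1/2 : ℝ) : ℂ) - 1) * ((1:ℂ) - (t:ℂ)) ^ (((1/2:ℝ):ℂ) - 1))
        = ∫ x in Ioo (0:ℝ) 1, ((x ^ (a - 1/2) * (1 - x) ^ (-(1/2):ℝ) : ℝ) : ℂ) := ?_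
      _ = _ := integral_ofReal
    apply setIntegral_congr_fun measurableSet_Ioo
    intro x hx
    obtain ⟨hx0, hx1⟩ := hx
    have h1 : ((x:ℂ)) ^ (((a + 1/2 : ℝ) : ℂ) - 1) = ((x ^ (a - 1/2) : ℝ) : ℂ) := by
      rw [Complex.ofReal_cpow hx0.le]
      congr 1
      push_cast
      ring
    have h2 : ((1:ℂ) - (x:ℂ)) ^ (((1/2 : ℝ) : ℂ) - 1) = (((1 - x) ^ (-(1/2):ℝ) : ℝ) : ℂ) := by
      rw [show ((1:ℂ) - (x:ℂ)) = (((1 - x : ℝ)) : ℂ) by push_cast; ring,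
        Complex.ofReal_cpow (by linarith)]
      congr 1
      push_cast
      ring
    dsimp only
    rw [h1, h2]
    push_cast
    ring
  rw [hcast] at hbc
  have hg1 : Complex.Gamma ((a + 1/2 : ℝ) : ℂ) = ((Real.Gamma (a + 1/2) : ℝ) : ℂ) :=
    Complex.Gamma_ofReal _
  have hg2 : Complex.Gamma ((1/2 : ℝ) : ℂ) = ((Real.Gamma (1/2) : ℝ) : ℂ) :=
    Complex.Gamma_ofReal _
  have hg3 : ((a + 1/2 : ℝ) : ℂ) + ((1/2:ℝ) : ℂ) = ((a + 1 : ℝ) : ℂ) := by push_cast; ring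
  rw [hg1, hg2, hg3, Complex.Gamma_ofReal, ← Complex.ofReal_mul, ← Complex.ofReal_mul] at hbc
  have := Complex.ofReal_inj.mp hbc
  rwa [Real.Gamma_one_half_eq] at this

lemma cau_Ioi (a : ℝ) (ha : 0 < a) :
    Real.Gamma (a + 1) * (2 * ∫ u in Ioi (0:ℝ), cau a u) =
      Real.sqrt Real.pi * Real.Gamma (a + 1/2) := by
  -- change of variables x = (1+u²)⁻¹ from Ioi 0 to Ioo 0 1
  set f : ℝ → ℝ := fun u => (1 + u ^ 2)⁻¹ with hf
  have hP : ∀ u : ℝ, (0:ℝ) < 1 + u ^ 2 := fun u => by positivity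
  have himg : f '' Ioi 0 = Ioo (0:ℝ) 1 := by
    ext x
    constructor
    · rintro ⟨u, hu, rfl⟩
      have hu : (0:ℝ) < u := hu
      constructor
      · exact inv_pos.2 (hP u)
      · rw [inv_lt_one_iff₀]
        right; nlinarith
    · rintro ⟨hx0, hx1⟩
      have hx' : (0:ℝ) < x⁻¹ - 1 := by
        have : 1 < x⁻¹ := (one_lt_inv_iff₀).2 ⟨hx0, hx1⟩
        linarith
      refine ⟨Real.sqrt (x⁻¹ - 1), Real.sqrt_pos.2 hx', ?_⟩
      simp only [hf, Real.sq_sqrt hx'.le]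
      rw [show (1 + (x⁻¹ - 1) : ℝ) = x⁻¹ by ring, inv_inv]
  have hinj : InjOn f (Ioi 0) := by
    intro u hu v hv h
    simp only [hf] at h
    have := inv_injective h
    have hu : (0:ℝ) < u := hu
    have hv : (0:ℝ) < v := hv
    nlinarith
  have hderiv : ∀ u ∈ Ioi (0:ℝ),
      HasDerivWithinAt f (-(2 * u) / (1 + u ^ 2) ^ 2) (Ioi 0) u := by
    intro u _
    have h1 : HasDerivAt (fun u : ℝ => 1 + u ^ 2) (2 * u) u := by
      simpa using (hasDerivAt_pow 2 u).const_add 1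
    exact (h1.inv (hP u).ne').hasDerivWithinAt
  have key : (∫ x in Ioo (0:ℝ) 1, x ^ (a - 1/2) * (1 - x) ^ (-(1/2):ℝ))
      = ∫ u in Ioi (0:ℝ), 2 * cau a u := by
    calc (∫ x in Ioo (0:ℝ) 1, x ^ (a - 1/2) * (1 - x) ^ (-(1/2):ℝ))
        = ∫ x in f '' Ioi 0, x ^ (a - 1/2) * (1 - x) ^ (-(1/2):ℝ) := by rw [himg]
      _ = ∫ u in Ioi (0:ℝ), |(-(2 * u) / (1 + u ^ 2) ^ 2)| •
            ((f u) ^ (a - 1/2) * (1 - f u) ^ (-(1/2):ℝ)) :=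
          integral_image_eq_integral_abs_deriv_smul measurableSet_Ioi hderiv hinj _
      _ = ∫ u in Ioi (0:ℝ), 2 * cau a u := by
          apply setIntegral_congr_fun measurableSet_Ioi
          intro u hu
          have hu : (0:ℝ) < u := hu
          have hPu := hP u
          dsimp only
          set P := 1 + u ^ 2 with hPdef
          have e0 : |(-(2 * u) / (1 + u ^ 2) ^ 2)| = 2 * u / (1 + u ^ 2) ^ 2 := by
            rw [abs_div, abs_neg, abs_of_nonneg (by positivity : (0:ℝ) ≤ 2*u),
              abs_of_nonneg (by positivity : (0:ℝ) ≤ (1+u^2)^2)]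
          have e1 : (f u) ^ (a - 1/2) = P ^ (-(a - 1/2)) := by
            simp only [hf, ← hPdef]
            rw [Real.inv_rpow hPu.le, ← Real.rpow_neg hPu.le]
          have e2 : (1 - f u) = u ^ 2 / P := by
            simp only [hf, ← hPdef]; field_simp
            rw [hPdef]; ring
          have e3 : (u ^ 2 / P) ^ (-(1/2):ℝ) = u⁻¹ * P ^ ((1/2):ℝ) := by
            rw [Real.div_rpow (by positivity) hPu.le]
            rw [← Real.rpow_natCast u 2, ← Real.rpow_mul hu.le]
            norm_num
            rw [Real.rpow_neg_one, Real.rpow_neg hPu.le, div_eq_mul_inv, inv_inv]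
          rw [smul_eq_mul, e0, e1, e2, e3]
          unfold cau
          rw [← hPdef]
          rw [show (P^2 : ℝ) = P ^ (2:ℝ) by
            rw [← Real.rpow_natCast P 2]; norm_num]
          rw [show (2 * u / P ^ (2:ℝ) * (P ^ (-(a - 1/2)) * (u⁻¹ * P ^ ((1/2):ℝ))) : ℝ)
              = 2 * (u * u⁻¹) * (P ^ (2:ℝ))⁻¹ * (P ^ (-(a - 1/2)) * P ^ ((1/2):ℝ)) by ring,
            mul_inv_cancel₀ hu.ne', ← Real.rpow_neg hPu.le, ← Real.rpow_add hPu,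
            mul_one, mul_assoc, ← Real.rpow_add hPu]
          congr 1
          congr 1
          ring
  have h2 := beta_real a ha
  rw [key, integral_const_mul] at h2
  rw [← h2]
  ring

lemma cau_integrable (a : ℝ) (ha : 0 < a) : Integrable (cau a) := by
  apply Integrable.mono integrable_inv_one_add_sq (cau_cont a).aestronglyMeasurable
  filter_upwards with u
  have h1 : (0:ℝ) < 1 + u ^ 2 := by positivity
  rw [Real.norm_eq_abs, Real.norm_eq_abs, abs_of_nonneg (cau_pos a u).le,
    abs_of_nonneg (by positivity : (0:ℝ) ≤ (1 + u^2)⁻¹)]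
  calc cau a u ≤ (1 + u ^ 2) ^ (-1 : ℝ) :=
      Real.rpow_le_rpow_of_exponent_le (by nlinarith [sq_nonneg u]) (by linarith)
    _ = (1 + u ^ 2)⁻¹ := Real.rpow_neg_one _

lemma cau_symm (a : ℝ) : (∫ u in Iic (0:ℝ), cau a u) = ∫ u in Ioi (0:ℝ), cau a u := by
  have : (∫ u in Ioi (0:ℝ), cau a (-u)) = ∫ u in Iic (-(0:ℝ)), cau a u :=
    integral_comp_neg_Ioi 0 (cau a)
  simp only [neg_zero] at this
  rw [← this]
  congr 1
  ext u
  unfold cau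
  rw [neg_pow]
  norm_num

noncomputable def Ccst (a : ℝ) : ℝ :=
  Real.Gamma (a + 1) / (Real.sqrt Real.pi * Real.Gamma (a + 1 / 2))

lemma Ccst_pos (a : ℝ) (ha : 0 < a) : 0 < Ccst a := by
  unfold Ccst
  have h1 : 0 < Real.Gamma (a + 1) := Real.Gamma_pos_of_pos (by linarith)
  have h2 : 0 < Real.Gamma (a + 1/2) := Real.Gamma_pos_of_pos (by linarith)
  have h3 : 0 < Real.sqrt Real.pi := Real.sqrt_pos.2 Real.pi_pos
  positivity

lemma Ccst_half (a : ℝ) (ha : 0 < a) : Ccst a * ∫ u in Iic (0:ℝ), cau a u = 1/2 := by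
  have h1 : 0 < Real.Gamma (a + 1) := Real.Gamma_pos_of_pos (by linarith)
  have h2 : 0 < Real.Gamma (a + 1/2) := Real.Gamma_pos_of_pos (by linarith)
  have h3 : 0 < Real.sqrt Real.pi := Real.sqrt_pos.2 Real.pi_pos
  have := cau_Ioi a ha
  rw [cau_symm a]
  unfold Ccst
  rw [div_mul_eq_mul_div, div_eq_iff (by positivity : Real.sqrt Real.pi * Real.Gamma (a + 1/2) ≠ 0)]
  linarith

lemma Xfun_eq (a s : ℝ) : Xfun a s = 1/2 + Ccst a * ∫ u in (0:ℝ)..s, cau a u := by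
  unfold Xfun Ccst
  rw [mul_assoc, hyp_eq a s]

lemma Xfun_pos (a : ℝ) (ha : 0 < a) (s : ℝ) : 0 < Xfun a s := by
  rw [Xfun_eq]
  rcases le_or_gt 0 s with hs | hs
  · have h1 : 0 ≤ ∫ u in (0:ℝ)..s, cau a u :=
      intervalIntegral.integral_nonneg hs (fun u _ => (cau_pos a u).le)
    nlinarith [Ccst_pos a ha]
  · have hIic : (∫ u in Iic (0:ℝ), cau a u)
        = (∫ u in Iic s, cau a u) + ∫ u in Ioc s 0, cau a u := by
      rw [← setIntegral_union (Iic_disjoint_Ioc le_rfl) measurableSet_Ioc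
        ((cau_integrable a ha).integrableOn) ((cau_integrable a ha).integrableOn),
        Iic_union_Ioc_eq_Iic hs.le]
    have hint : (∫ u in (0:ℝ)..s, cau a u) = -∫ u in Ioc s 0, cau a u := by
      rw [intervalIntegral.integral_symm, intervalIntegral.integral_of_le hs.le]
    have hpos : 0 < ∫ u in Iic s, cau a u := by
      rw [setIntegral_pos_iff_support_of_nonneg_ae]
      · have : Function.support (cau a) = univ := by
          ext u; simp [Function.mem_support, (cau_pos a u).ne']
        rw [this, univ_inter]
        simp [Real.volume_Iic]
      · filter_upwards with u using (cau_pos a u).le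
      · exact (cau_integrable a ha).integrableOn
    have hhalf := Ccst_half a ha
    have hc := Ccst_pos a ha
    rw [hint]
    nlinarith [hIic]

lemma X_hasDeriv (a : ℝ) (s : ℝ) : HasDerivAt (Xfun a) (Ccst a * cau a s) s := by
  have h : HasDerivAt (fun t => ∫ u in (0:ℝ)..t, cau a u) (cau a s) s :=
    ((cau_cont a).integral_hasStrictDerivAt 0 s).hasDerivAt
  have hXf : Xfun a = fun t => 1/2 + Ccst a * ∫ u in (0:ℝ)..t, cau a u := funext (Xfun_eq a)
  rw [hXf]
  exact (h.const_mul (Ccst a)).const_add (1/2)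

lemma sigma_hasDeriv (a : ℝ) (ha : 0 < a) (s : ℝ) :
    HasDerivAt (fun t : ℝ => Ccst a * (1 + t ^ 2) ^ (-a) / Xfun a t)
      ((-2 * a * s * (Ccst a * (1 + s ^ 2) ^ (-a) / Xfun a s)
        - (Ccst a * (1 + s ^ 2) ^ (-a) / Xfun a s) ^ 2) / (1 + s ^ 2)) s := by
  have hP : (0:ℝ) < 1 + s ^ 2 := by positivity
  have hX := Xfun_pos a ha s
  have hN : HasDerivAt (fun t : ℝ => (1 + t ^ 2) ^ (-a))
      (2 * s * (-a) * (1 + s ^ 2) ^ (-a - 1)) s := by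
    have h1 : HasDerivAt (fun t : ℝ => 1 + t ^ 2) (2 * s) s := by
      simpa using (hasDerivAt_pow 2 s).const_add 1
    exact h1.rpow_const (Or.inl hP.ne')
  have hdiv := ((hN.const_mul (Ccst a)).div (X_hasDeriv a s) hX.ne')
  refine hdiv.congr_deriv (Eq.symm ?_)
  have e1 : (1 + s ^ 2 : ℝ) ^ (-a - 1) = (1 + s ^ 2) ^ (-a) / (1 + s ^ 2) := by
    rw [div_eq_mul_inv, ← Real.rpow_neg_one (1 + s ^ 2), ← Real.rpow_add hP, sub_eq_add_neg]
  have e2 : cau a s = (1 + s ^ 2) ^ (-a) / (1 + s ^ 2) := by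
    unfold cau
    rw [← e1]
    congr 1
    ring
  rw [e1, e2]
  field_simp

/-- `σ₁(s) = [Γ(a+1)/(√π Γ(a+1/2))](1+s²)^{-a}/X(s)` solves the `N = 1` case of the
second order second degree ODE for the Cauchy single-interval gap probability. -/
theorem stmt12 (a : ℝ) (ha : 0 < a) (σ : ℝ → ℝ)
    (hσ : ∀ s : ℝ, σ s =
      Real.Gamma (a + 1) / (Real.sqrt Real.pi * Real.Gamma (a + 1 / 2)) *
        (1 + s ^ 2 : ℝ) ^ (-a) / Xfun a s) :
    ∀ s : ℝ,
      (1 + s ^ 2) ^ 2 * (deriv (deriv σ) s) ^ 2 +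
        4 * (1 + s ^ 2) * (deriv σ s) ^ 3 -
        8 * s * σ s * (deriv σ s) ^ 2 +
        4 * (σ s) ^ 2 * (deriv σ s - a ^ 2) +
        8 * a ^ 2 * s * σ s * deriv σ s +
        4 * ((1 + 2 * a) - a ^ 2 * s ^ 2) * (deriv σ s) ^ 2 = 0 := by
  have hσf : σ = fun t => Ccst a * (1 + t ^ 2) ^ (-a) / Xfun a t :=
    funext fun t => by rw [hσ t]; rfl
  have key : ∀ t : ℝ, HasDerivAt σ ((-2 * a * t * σ t - σ t ^ 2) / (1 + t ^ 2)) t := by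
    intro t
    rw [hσf]
    simpa using sigma_hasDeriv a ha t
  have hd1 : deriv σ = fun t => (-2 * a * t * σ t - σ t ^ 2) / (1 + t ^ 2) :=
    funext fun t => (key t).deriv
  intro s
  have hP : (0:ℝ) < 1 + s ^ 2 := by positivity
  set S := σ s with hS
  set D := (-2 * a * s * S - S ^ 2) / (1 + s ^ 2) with hDdef
  have hks : HasDerivAt σ D s := key s
  have hnum : HasDerivAt (fun t => -2 * a * t * σ t - σ t ^ 2)
      ((-2 * a * S + -2 * a * s * D) - 2 * S ^ 1 * D) s := by
    have h1 : HasDerivAt (fun t : ℝ => -2 * a * t) (-2 * a) s := by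
      simpa using (hasDerivAt_id s).const_mul (-2 * a)
    have h2 := h1.mul hks
    have h3 := hks.pow 2
    refine (h2.sub h3).congr_deriv ?_
    norm_num
    ring
  have hden : HasDerivAt (fun t : ℝ => 1 + t ^ 2) (2 * s) s := by
    simpa using (hasDerivAt_pow 2 s).const_add 1
  have hDder := hnum.div hden hP.ne'
  have hd2 : deriv (deriv σ) s =
      (((-2 * a * S + -2 * a * s * D) - 2 * S ^ 1 * D) * (1 + s ^ 2)
        - (-2 * a * s * S - S ^ 2) * (2 * s)) / (1 + s ^ 2) ^ 2 := by
    rw [hd1]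
    exact hDder.deriv
  have hds : deriv σ s = D := hks.deriv
  rw [hd2, hds, hDdef]
  field_simp
  ring
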